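/- Let 0 < β ≤ 1, d ≥ 1, let x¹ : [0,1] → ℝ^d be continuous with ‖x¹‖_β < ∞, let x² : {(s,t) : 0 ≤ s ≤ t ≤ 1} → ℝ^d ⊗ ℝ^d satisfy the weak geometricity condition x²(s,t) + π(x²(s,t)) = x¹_{s,t} ⊗ x¹_{s,t} for all s ≤ t, where π : ℝ^d ⊗ ℝ^d → ℝ^d ⊗ ℝ^d is the linear map with π(a ⊗ b) = b ⊗ a, and let y : [0,1] → ℝ^d be continuously differentiable. Set P(s,t) := ∫_s^t x¹_{s,u} ⊗ y'(u) du − x²(s,t) and Q(s,t) := y_{s,t} ⊗ x¹_{s,t} − ∫_s^t y'(u) ⊗ x¹_{s,u} du − x²(s,t). Then for all s ≤ t the exact identity Q(s,t) = (y_{s,t} − x¹_{s,t}) ⊗ x¹_{s,t} − π(P(s,t)) holds, and consequently sup_{0 ≤ s < t ≤ 1} |Q(s,t)|/(t − s)^{2β} ≤ ‖x¹‖_β · sup_{0 ≤ s < t ≤ 1} |y_{s,t} − x¹_{s,t}|/(t − s)^β + sup_{0 ≤ s < t ≤ 1} |P(s,t)|/(t − s)^{2β}. -/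

import Mathlib

open MeasureTheory ProbabilityTheory Filter Set

noncomputable section

abbrev Vec (d : ℕ) := EuclideanSpace ℝ (Fin d)
abbrev Ten (d : ℕ) := EuclideanSpace ℝ (Fin d × Fin d)

/-- Elementary tensor `a ⊗ b` of two vectors in `ℝ^d`, realized in `ℝ^{d×d}`
with the Euclidean (Hilbert–Schmidt) norm. -/
def tens {d : ℕ} (a b : Vec d) : Ten d := WithLp.toLp 2 (fun p : Fin d × Fin d => a p.1 * b p.2)

/-- The transposition map `π` with `π (a ⊗ b) = b ⊗ a`. -/
def tswap {d : ℕ} (z : Ten d) : Ten d := WithLp.toLp 2 (fun p : Fin d × Fin d => z (p.2, p.1))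

/-- A subdivision `0 = t₀ < t₁ < ⋯ < t_N = 1` of `[0,1]`. -/
structure Subdivision : Type where
  N : ℕ
  pos : 0 < N
  t : ℕ → ℝ
  zero : t 0 = 0
  last : t N = 1
  mono : ∀ i, i < N → t i < t (i + 1)

/-- The mesh `|D|` of a subdivision. -/
def Subdivision.mesh (D : Subdivision) : ℝ :=
  (Finset.range D.N).sup' (Finset.nonempty_range_iff.mpr D.pos.ne')
    (fun i => D.t (i + 1) - D.t i)

/-- `xD` is the piecewise linear interpolation of `x` along `D`. -/
def IsPL {d : ℕ} (D : Subdivision) (x xD : ℝ → Vec d) : Prop :=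
  ∀ i, i < D.N → ∀ u ∈ Icc (D.t i) (D.t (i + 1)),
    xD u = x (D.t i) + ((u - D.t i) / (D.t (i + 1) - D.t i)) • (x (D.t (i + 1)) - x (D.t i))

/-- `xD'` is the (piecewise constant) derivative of the piecewise linear
interpolation of `x` along `D`. -/
def IsPLDeriv {d : ℕ} (D : Subdivision) (x xD' : ℝ → Vec d) : Prop :=
  ∀ i, i < D.N → ∀ u ∈ Ioo (D.t i) (D.t (i + 1)),
    xD' u = (D.t (i + 1) - D.t i)⁻¹ • (x (D.t (i + 1)) - x (D.t i))

/-- `B` is a standard `d`-dimensional Brownian motion on `[0,1]`: a.s. continuous paths,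
`B 0 = 0`, and the coordinates of all increments over `[0,1]` are jointly independent
centered Gaussians, the coordinates of the increment over `[s,t]` having variance `t - s`.
(Equivalently, the `d` coordinate processes are independent centered Gaussian processes
with covariance `min s t`.) -/
structure IsBrownian (d : ℕ) {Ω : Type*} [MeasurableSpace Ω] (P : Measure Ω)
    (B : ℝ → Ω → Vec d) : Prop where
  meas : ∀ t, Measurable (B t)
  cont : ∀ᵐ ω ∂P, ContinuousOn (fun t => B t ω) (Icc 0 1)
  init : ∀ᵐ ω ∂P, B 0 ω = 0
  incr : ∀ s t : ℝ, 0 ≤ s → s ≤ t → t ≤ 1 → ∀ i : Fin d,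
    Measure.map (fun ω => B t ω i - B s ω i) P = gaussianReal 0 (Real.toNNReal (t - s))
  indep : ∀ (n : ℕ) (τ : ℕ → ℝ), Monotone τ → (∀ k, τ k ∈ Icc (0 : ℝ) 1) →
    iIndepFun
      (fun p : Fin n × Fin d => fun ω => B (τ (p.1.val + 1)) ω p.2 - B (τ p.1.val) ω p.2) P

lemma tens_norm {d : ℕ} (a b : Vec d) : ‖tens a b‖ = ‖a‖ * ‖b‖ := by
  simp only [EuclideanSpace.norm_eq]
  rw [← Real.sqrt_mul (by positivity)]
  congr 1
  rw [Finset.sum_mul_sum, Fintype.sum_prod_type]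
  simp [tens, norm_mul, mul_pow]

lemma tswap_norm {d : ℕ} (z : Ten d) : ‖tswap z‖ = ‖z‖ := by
  simp only [EuclideanSpace.norm_eq]
  congr 1
  exact Fintype.sum_equiv (Equiv.prodComm _ _) _ _ (fun p => rfl)

lemma tswap_sub {d : ℕ} (a b : Ten d) : tswap (a - b) = tswap a - tswap b :=
  PiLp.ext fun p => by simp [tswap]

lemma tswap_tens {d : ℕ} (a b : Vec d) : tswap (tens a b) = tens b a :=
  PiLp.ext fun p => by simp [tswap, tens, mul_comm]

lemma tens_sub_left {d : ℕ} (a b c : Vec d) :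
    tens (a - b) c = tens a c - tens b c :=
  PiLp.ext fun p => by simp [tens, sub_mul]

/-- `tswap` as a continuous linear map. -/
def tswapL (d : ℕ) : Ten d →L[ℝ] Ten d :=
  LinearMap.mkContinuous
    { toFun := tswap
      map_add' := fun _ _ => rfl
      map_smul' := fun _ _ => PiLp.ext fun p => by simp [tswap] } 1
    (fun z => by rw [one_mul]; exact le_of_eq (tswap_norm z))

/-- `tens` as a continuous bilinear map. -/
def tensL (d : ℕ) : Vec d →L[ℝ] Vec d →L[ℝ] Ten d :=
  LinearMap.mkContinuous₂
    { toFun := fun a =>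
        { toFun := tens a
          map_add' := fun b c => PiLp.ext fun p => by simp [tens, mul_add]
          map_smul' := fun r b => PiLp.ext fun p => by simp [tens, mul_left_comm] }
      map_add' := fun a b => LinearMap.ext fun c => PiLp.ext fun p => by simp [tens, add_mul]
      map_smul' := fun r a => LinearMap.ext fun c => PiLp.ext fun p => by simp [tens, mul_assoc] }
    1 (fun a b => by rw [one_mul]; exact le_of_eq (tens_norm a b))

/-- **Key step in the proof of Proposition 2 of the paper** (the inequality
`A₃ⁿ ≤ ‖x‖ (A₁ⁿ + A₄ⁿ)`). With
`P(s,t) = ∫_s^t x¹_{s,u} ⊗ y'(u) du − x²(s,t)` and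
`Q(s,t) = y_{s,t} ⊗ x¹_{s,t} − ∫_s^t y'(u) ⊗ x¹_{s,u} du − x²(s,t)`,
if `x²` is weakly geometric over `x¹` then
`Q(s,t) = (y_{s,t} − x¹_{s,t}) ⊗ x¹_{s,t} − π(P(s,t))` exactly, and consequently the
`2β`-Hölder bound for `Q` follows from the `β`-Hölder bound `M₁` on `y − x¹` and the
`2β`-Hölder bound `M₂` on `P`, via `‖x¹‖_β ≤ Mx`. -/
theorem integration_by_parts_defect (β : ℝ) (hβ0 : 0 < β) (hβ1 : β ≤ 1)
    (d : ℕ) (hd : 1 ≤ d) (x : ℝ → Vec d) (x2 : ℝ → ℝ → Ten d) (y y' : ℝ → Vec d)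
    (Mx M₁ M₂ : ℝ)
    (hx : ContinuousOn x (Icc 0 1)) (hMx : 0 ≤ Mx)
    (hhold : ∀ s t : ℝ, 0 ≤ s → s < t → t ≤ 1 → ‖x t - x s‖ ≤ Mx * (t - s) ^ β)
    (hgeom : ∀ s t : ℝ, 0 ≤ s → s ≤ t → t ≤ 1 →
      x2 s t + tswap (x2 s t) = tens (x t - x s) (x t - x s))
    (hy' : ContinuousOn y' (Icc 0 1))
    (hy : ∀ t ∈ Icc (0 : ℝ) 1, HasDerivWithinAt y (y' t) (Icc 0 1) t) :
    (∀ s t : ℝ, 0 ≤ s → s ≤ t → t ≤ 1 →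
      tens (y t - y s) (x t - x s) - (∫ u in s..t, tens (y' u) (x u - x s)) - x2 s t
        = tens ((y t - y s) - (x t - x s)) (x t - x s)
          - tswap ((∫ u in s..t, tens (x u - x s) (y' u)) - x2 s t)) ∧
    ((∀ s t : ℝ, 0 ≤ s → s < t → t ≤ 1 →
        ‖(y t - y s) - (x t - x s)‖ ≤ M₁ * (t - s) ^ β) →
     (∀ s t : ℝ, 0 ≤ s → s < t → t ≤ 1 →
        ‖(∫ u in s..t, tens (x u - x s) (y' u)) - x2 s t‖ ≤ M₂ * (t - s) ^ (2 * β)) →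
     ∀ s t : ℝ, 0 ≤ s → s < t → t ≤ 1 →
       ‖tens (y t - y s) (x t - x s) - (∫ u in s..t, tens (y' u) (x u - x s)) - x2 s t‖
         ≤ (Mx * M₁ + M₂) * (t - s) ^ (2 * β)) := by
  have key : ∀ s t : ℝ, 0 ≤ s → s ≤ t → t ≤ 1 →
      tens (y t - y s) (x t - x s) - (∫ u in s..t, tens (y' u) (x u - x s)) - x2 s t
        = tens ((y t - y s) - (x t - x s)) (x t - x s)
          - tswap ((∫ u in s..t, tens (x u - x s) (y' u)) - x2 s t) := by
    intro s t hs hst ht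
    have hsub : Icc s t ⊆ Icc (0 : ℝ) 1 := Icc_subset_Icc hs ht
    have hxc : ContinuousOn (fun u => x u - x s) (Icc s t) :=
      (hx.mono hsub).sub continuousOn_const
    have hyc : ContinuousOn y' (Icc s t) := hy'.mono hsub
    have hcont : ContinuousOn (fun u => tens (x u - x s) (y' u)) (Icc s t) := by
      have : ContinuousOn (fun u => tensL d (x u - x s) (y' u)) (Icc s t) :=
        (tensL d).continuous₂.comp_continuousOn (hxc.prodMk hyc)
      exact this
    have hint : IntervalIntegrable (fun u => tens (x u - x s) (y' u)) volume s t := by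
      apply ContinuousOn.intervalIntegrable
      rwa [uIcc_of_le hst]
    have hswap_int : tswap (∫ u in s..t, tens (x u - x s) (y' u))
        = ∫ u in s..t, tens (y' u) (x u - x s) := by
      have h := (tswapL d).intervalIntegral_comp_comm hint
      have h2 : (∫ u in s..t, tswapL d (tens (x u - x s) (y' u)))
          = ∫ u in s..t, tens (y' u) (x u - x s) := by
        congr 1
        exact funext fun u => tswap_tens _ _
      rw [← h2, h]; rfl
    have hgeo := hgeom s t hs hst ht
    have h2 : tswap (x2 s t) = tens (x t - x s) (x t - x s) - x2 s t := by
      rw [← hgeo]; abel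
    rw [tswap_sub, hswap_int, h2]
    conv_rhs => rw [tens_sub_left]
    have habel : ∀ A B I C : Ten d, A - I - C = (A - B) - (I - (B - C)) := by
      intro A B I C; abel
    exact habel _ _ _ _
  refine ⟨key, ?_⟩
  intro h1 h2 s t hs hst ht
  have hts : 0 < t - s := by linarith
  rw [key s t hs hst.le ht]
  have hb1 : ‖tens ((y t - y s) - (x t - x s)) (x t - x s)‖
      ≤ (M₁ * (t - s) ^ β) * (Mx * (t - s) ^ β) := by
    rw [tens_norm]
    exact mul_le_mul (h1 s t hs hst ht) (hhold s t hs hst ht) (norm_nonneg _)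
      (le_trans (norm_nonneg _) (h1 s t hs hst ht))
  have hb2 : ‖tswap ((∫ u in s..t, tens (x u - x s) (y' u)) - x2 s t)‖
      ≤ M₂ * (t - s) ^ (2 * β) := by
    rw [tswap_norm]; exact h2 s t hs hst ht
  have hexp : (M₁ * (t - s) ^ β) * (Mx * (t - s) ^ β)
      = Mx * M₁ * (t - s) ^ (2 * β) := by
    rw [two_mul, Real.rpow_add hts]; ring
  calc ‖tens ((y t - y s) - (x t - x s)) (x t - x s)
        - tswap ((∫ u in s..t, tens (x u - x s) (y' u)) - x2 s t)‖
      ≤ ‖tens ((y t - y s) - (x t - x s)) (x t - x s)‖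
        + ‖tswap ((∫ u in s..t, tens (x u - x s) (y' u)) - x2 s t)‖ := norm_sub_le _ _
    _ ≤ Mx * M₁ * (t - s) ^ (2 * β) + M₂ * (t - s) ^ (2 * β) := by
        rw [← hexp]; exact add_le_add hb1 hb2
    _ = (Mx * M₁ + M₂) * (t - s) ^ (2 * β) := by ring

end
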